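/- Let m₁, m₂, r, F be positive integers with F = r·m₂ and F ≥ 2. Then the maximum K for which a (K, F, F−2, m₁F+r)-PDA exists equals (m₁·F·(F−1) + m₂·r·(r−1))/2; i.e., K_{(F,2,m₁F+r)} = m₁·K_{(F,2,F)} + m₂·K_{(r,2,r)}. -/

import Mathlib

/-- A `(K, F, Z, S)` placement delivery array: an `F × K` array over
`{0, …, S-1} ∪ {*}` (with `none` playing the role of `*`) such that
(1) each integer occurs at most once in each row and in each column,
(2) whenever two distinct cells `(a, b)` and `(c, d)` contain the same
integer, the opposite corners `(a, d)` and `(c, b)` contain `*`, and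
(3) the symbol `*` occurs exactly `Z` times in each column. -/
def IsPDA (K F Z S : ℕ) (P : Fin F → Fin K → Option (Fin S)) : Prop :=
  (∀ (i : Fin F) (j j' : Fin K) (s : Fin S), P i j = some s → P i j' = some s → j = j') ∧
  (∀ (i i' : Fin F) (j : Fin K) (s : Fin S), P i j = some s → P i' j = some s → i = i') ∧
  (∀ (a c : Fin F) (b d : Fin K) (s : Fin S),
      (a, b) ≠ (c, d) → P a b = some s → P c d = some s →
      P a d = none ∧ P c b = none) ∧
  (∀ j : Fin K, (Finset.univ.filter (fun i => P i j = none)).card = Z)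

/-- There exists a `(K, F, Z, S)` placement delivery array. -/
def PDAExists (K F Z S : ℕ) : Prop :=
  ∃ P : Fin F → Fin K → Option (Fin S), IsPDA K F Z S P

open Finset


/-- strict pairs -/
abbrev SP (n : ℕ) := {p : Fin n × Fin n // p.1 < p.2}

def spEquiv (n : ℕ) : SP n ≃ Σ j : Fin n, Fin j.1 where
  toFun p := ⟨p.1.2, ⟨p.1.1.1, p.2⟩⟩
  invFun x := ⟨(⟨x.2.1, lt_trans x.2.2 x.1.2⟩, x.1), x.2.2⟩
  left_inv p := rfl
  right_inv x := rfl

lemma card_SP (n : ℕ) : Fintype.card (SP n) = n * (n - 1) / 2 := by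
  rw [Fintype.card_congr (spEquiv n), Fintype.card_sigma]
  simp only [Fintype.card_fin]
  rw [Fin.sum_univ_eq_sum_range (fun i => i)]
  have := Finset.sum_range_id_mul_two n
  omega

section Upper
variable {K F S m₁ r : ℕ} {P : Fin F → Fin K → Option (Fin S)}

lemma two_filled (hF2 : 2 ≤ F)
    (h4 : ∀ j : Fin K, (Finset.univ.filter (fun i => P i j = none)).card = F - 2) (j : Fin K) :
    (Finset.univ.filter (fun i => P i j ≠ none)).card = 2 := by
  have h := Finset.card_filter_add_card_filter_not (s := (univ : Finset (Fin F)))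
      (p := fun i => P i j = none)
  rw [h4 j, Finset.card_univ, Fintype.card_fin] at h
  have e : (Finset.univ.filter (fun i => ¬ P i j = none)) =
      (Finset.univ.filter (fun i => P i j ≠ none)) := by simp [Ne]
  rw [e] at h
  omega

lemma partner_exists (hF2 : 2 ≤ F)
    (h4 : ∀ j : Fin K, (Finset.univ.filter (fun i => P i j = none)).card = F - 2)
    {v : Fin F} {j : Fin K} (hv : P v j ≠ none) :
    ∃ p : Fin F × Fin S, p.1 ≠ v ∧ P p.1 j = some p.2 := by
  have h2 := two_filled hF2 h4 j
  rw [Finset.card_eq_two] at h2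
  obtain ⟨x, y, hxy, hset⟩ := h2
  have hvmem : v ∈ (Finset.univ.filter (fun i => P i j ≠ none)) := by
    simp [hv]
  rw [hset] at hvmem
  simp only [Finset.mem_insert, Finset.mem_singleton] at hvmem
  rcases hvmem with rfl | rfl
  · have hy : y ∈ ({v, y} : Finset (Fin F)) := by simp
    rw [← hset] at hy
    simp only [Finset.mem_filter, Finset.mem_univ, true_and] at hy
    obtain ⟨t, ht⟩ := Option.ne_none_iff_exists'.mp hy
    exact ⟨(y, t), hxy.symm, ht⟩
  · have hx : x ∈ ({x, v} : Finset (Fin F)) := by simp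
    rw [← hset] at hx
    simp only [Finset.mem_filter, Finset.mem_univ, true_and] at hx
    obtain ⟨t, ht⟩ := Option.ne_none_iff_exists'.mp hx
    exact ⟨(x, t), hxy, ht⟩

lemma row_bound (hm₁ : 0 < m₁) (hr : 0 < r) (hF2 : 2 ≤ F) (hS : S = m₁ * F + r)
    (hP : IsPDA K F (F - 2) S P) (v : Fin F) :
    (Finset.univ.filter (fun j => P v j ≠ none)).card + m₁ + 1 ≤ S := by
  obtain ⟨h1, h2, h3, h4⟩ := hP
  have hSpos : 0 < S := hS ▸ Nat.lt_of_lt_of_le hr (Nat.le_add_left _ _)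
  set s₀ : Fin S := ⟨0, hSpos⟩ with hs₀
  set cols := (Finset.univ.filter (fun j => P v j ≠ none)) with hcols
  have hex : ∀ j : Fin K, ∃ p : Fin F × Fin S,
      P v j ≠ none → (p.1 ≠ v ∧ P p.1 j = some p.2) := by
    intro j
    by_cases hv : P v j ≠ none
    · obtain ⟨p, hp⟩ := partner_exists hF2 h4 hv
      exact ⟨p, fun _ => hp⟩
    · exact ⟨(v, s₀), fun h => absurd h hv⟩
  choose f hf using hex
  set Mset := cols.image (fun j => (f j).2) with hM
  set Lset := cols.image (fun j => (P v j).getD s₀) with hL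
  have hLcard : Lset.card = cols.card := by
    apply Finset.card_image_of_injOn
    intro j hj j' hj' hjj'
    simp only [hcols, Finset.coe_filter, Set.mem_setOf_eq] at hj hj'
    obtain ⟨a, ha⟩ := Option.ne_none_iff_exists'.mp hj.2
    obtain ⟨a', ha'⟩ := Option.ne_none_iff_exists'.mp hj'.2
    have hjj2 : (P v j).getD s₀ = (P v j').getD s₀ := hjj'
    rw [ha, ha', Option.getD_some, Option.getD_some] at hjj2
    subst hjj2
    exact h1 v j j' a ha ha'
  have hdisj : Disjoint Lset Mset := by
    rw [Finset.disjoint_left]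
    intro s hsL hsM
    simp only [hL, hM, Finset.mem_image] at hsL hsM
    obtain ⟨j₀, hj₀, hj₀s⟩ := hsL
    obtain ⟨j₁, hj₁, hj₁s⟩ := hsM
    simp only [hcols, Finset.mem_filter] at hj₀ hj₁
    obtain ⟨a, ha⟩ := Option.ne_none_iff_exists'.mp hj₀.2
    rw [ha, Option.getD_some] at hj₀s
    subst hj₀s
    obtain ⟨hb, hbP⟩ := hf j₁ hj₁.2
    rw [hj₁s] at hbP
    have hne : (v, j₀) ≠ ((f j₁).1, j₁) := by
      intro h
      rw [Prod.ext_iff] at h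
      exact hb h.1.symm
    have := (h3 v (f j₁).1 j₀ j₁ _ hne ha hbP).1
    exact hj₁.2 this
  have hcard : Lset.card + Mset.card ≤ S := by
    rw [← Finset.card_union_of_disjoint hdisj]
    calc (Lset ∪ Mset).card ≤ Fintype.card (Fin S) := Finset.card_le_univ _
    _ = S := Fintype.card_fin S
  have herase : (Finset.univ.erase v).card = F - 1 := by
    rw [Finset.card_erase_of_mem (Finset.mem_univ v), Finset.card_univ, Fintype.card_fin]
  have hfiber : cols.card ≤ (F - 1) * Mset.card := by
    apply Finset.card_le_mul_card_image
    intro t _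
    rw [← herase]
    apply Finset.card_le_card_of_injOn (fun j => (f j).1)
    · intro j hj
      rw [Finset.mem_coe, Finset.mem_filter, hcols, Finset.mem_filter] at hj
      exact Finset.mem_erase.mpr ⟨(hf j hj.1.2).1, Finset.mem_univ _⟩
    · intro j hj j' hj' hjj'
      simp only [Finset.coe_filter, Set.mem_setOf_eq, hcols, Finset.mem_filter] at hj hj'
      obtain ⟨⟨_, hjv⟩, hjt⟩ := hj
      obtain ⟨⟨_, hjv'⟩, hjt'⟩ := hj'
      have e1 := (hf j hjv).2
      have e2 := (hf j' hjv').2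
      have hjj2 : (f j).1 = (f j').1 := hjj'
      rw [hjt] at e1
      rw [hjt', ← hjj2] at e2
      exact h1 (f j).1 j j' t e1 e2
  rcases le_or_gt Mset.card m₁ with hm | hm
  · have hc : cols.card ≤ (F - 1) * m₁ := le_trans hfiber (Nat.mul_le_mul_left _ hm)
    have hFm : (F - 1) * m₁ + m₁ = F * m₁ := by
      have hF1 : F - 1 + 1 = F := by omega
      calc (F - 1) * m₁ + m₁ = (F - 1 + 1) * m₁ := by ring
      _ = F * m₁ := by rw [hF1]
    have hcm : F * m₁ = m₁ * F := mul_comm _ _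
    omega
  · omega

lemma total_count (hF2 : 2 ≤ F)
    (h4 : ∀ j : Fin K, (Finset.univ.filter (fun i => P i j = none)).card = F - 2) :
    ∑ v : Fin F, (Finset.univ.filter (fun j => P v j ≠ none)).card = 2 * K := by
  have h : ∀ v : Fin F, (Finset.univ.filter (fun j => P v j ≠ none)).card
      = ∑ j : Fin K, if P v j ≠ none then 1 else 0 := by
    intro v; rw [Finset.card_filter]
  simp only [h]
  rw [Finset.sum_comm]
  have h' : ∀ j : Fin K, (∑ v : Fin F, if P v j ≠ none then 1 else 0) = 2 := by
    intro j
    rw [← Finset.card_filter]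
    exact two_filled hF2 h4 j
  simp only [h']
  simp [Finset.sum_const, mul_comm]

lemma upper_bound (hm₁ : 0 < m₁) (hr : 0 < r) (hF2 : 2 ≤ F) (hS : S = m₁ * F + r)
    (hP : IsPDA K F (F - 2) S P) : 2 * K ≤ F * (S - m₁ - 1) := by
  have h4 := hP.2.2.2
  rw [← total_count hF2 h4]
  calc ∑ v : Fin F, (Finset.univ.filter (fun j => P v j ≠ none)).card
      ≤ ∑ _v : Fin F, (S - m₁ - 1) := by
        apply Finset.sum_le_sum
        intro v _
        have := row_bound hm₁ hr hF2 hS hP v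
        omega
    _ = F * (S - m₁ - 1) := by
        rw [Finset.sum_const, Finset.card_univ, Fintype.card_fin, smul_eq_mul]

end Upper

section Constr
variable (m₁ m₂ r F : ℕ) (hF : F = r * m₂)

def myG (c : Fin m₂) (u : Fin r) : Fin F := finCongr hF.symm (finProdFinEquiv (u, c))

lemma myG_eq_iff {c c' : Fin m₂} {u u' : Fin r} :
    myG m₂ r F hF c u = myG m₂ r F hF c' u' ↔ c = c' ∧ u = u' := by
  constructor
  · intro h
    have h2 := (finCongr hF.symm).injective h
    have h3 := finProdFinEquiv.injective h2
    rw [Prod.ext_iff] at h3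
    exact ⟨h3.2, h3.1⟩
  · rintro ⟨rfl, rfl⟩; rfl

def myP (i : Fin F) : (Fin m₁ × SP F) ⊕ (Fin m₂ × SP r) → Option ((Fin m₁ × Fin F) ⊕ Fin r) :=
  Sum.elim
    (fun p => if i = p.2.1.1 then some (Sum.inl (p.1, p.2.1.2))
      else if i = p.2.1.2 then some (Sum.inl (p.1, p.2.1.1)) else none)
    (fun p => if i = myG m₂ r F hF p.1 p.2.1.1 then some (Sum.inr p.2.1.2)
      else if i = myG m₂ r F hF p.1 p.2.1.2 then some (Sum.inr p.2.1.1) else none)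

lemma myP_inl_eq_some {i : Fin F} {c : Fin m₁} {e : SP F} {s} :
    myP m₁ m₂ r F hF i (Sum.inl (c, e)) = some s ↔
      (i = e.1.1 ∧ s = Sum.inl (c, e.1.2)) ∨ (i = e.1.2 ∧ s = Sum.inl (c, e.1.1)) := by
  have hne : e.1.1 ≠ e.1.2 := ne_of_lt e.2
  simp only [myP, Sum.elim_inl]
  rcases eq_or_ne i e.1.1 with h1 | h1
  · rw [if_pos h1]
    have h2 : i ≠ e.1.2 := h1 ▸ hne
    simp [h1, h2, eq_comm]
    exact fun h => absurd h hne
  · rw [if_neg h1]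
    rcases eq_or_ne i e.1.2 with h2 | h2
    · rw [if_pos h2]
      simp [h1, h2, eq_comm]
      exact fun h => absurd h hne
    · rw [if_neg h2]
      simp [h1, h2]

lemma myP_inr_eq_some {i : Fin F} {c : Fin m₂} {e : SP r} {s} :
    myP m₁ m₂ r F hF i (Sum.inr (c, e)) = some s ↔
      (i = myG m₂ r F hF c e.1.1 ∧ s = Sum.inr e.1.2)
      ∨ (i = myG m₂ r F hF c e.1.2 ∧ s = Sum.inr e.1.1) := by
  have hne : e.1.1 ≠ e.1.2 := ne_of_lt e.2
  have hgne : myG m₂ r F hF c e.1.1 ≠ myG m₂ r F hF c e.1.2 := by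
    rw [Ne, myG_eq_iff]
    tauto
  simp only [myP, Sum.elim_inr]
  rcases eq_or_ne i (myG m₂ r F hF c e.1.1) with h1 | h1
  · rw [if_pos h1]
    have h2 : i ≠ myG m₂ r F hF c e.1.2 := h1 ▸ hgne
    simp [h1, h2, eq_comm]
    exact fun h => absurd h hgne
  · rw [if_neg h1]
    rcases eq_or_ne i (myG m₂ r F hF c e.1.2) with h2 | h2
    · rw [if_pos h2]
      simp [h1, h2, eq_comm]
      exact fun h => absurd h hgne
    · rw [if_neg h2]
      simp [h1, h2]

lemma myP_inl_eq_none {i : Fin F} {c : Fin m₁} {e : SP F} :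
    myP m₁ m₂ r F hF i (Sum.inl (c, e)) = none ↔ i ≠ e.1.1 ∧ i ≠ e.1.2 := by
  simp only [myP, Sum.elim_inl]
  split_ifs with h1 h2 <;> simp_all

lemma myP_inr_eq_none {i : Fin F} {c : Fin m₂} {e : SP r} :
    myP m₁ m₂ r F hF i (Sum.inr (c, e)) = none ↔
      i ≠ myG m₂ r F hF c e.1.1 ∧ i ≠ myG m₂ r F hF c e.1.2 := by
  simp only [myP, Sum.elim_inr]
  split_ifs with h1 h2 <;> simp_all

-- Condition 1 : row uniqueness
lemma myP_h1 (i : Fin F) (j j' : (Fin m₁ × SP F) ⊕ (Fin m₂ × SP r)) (s)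
    (h : myP m₁ m₂ r F hF i j = some s) (h' : myP m₁ m₂ r F hF i j' = some s) : j = j' := by
  rcases j with ⟨c, e⟩ | ⟨c, e⟩ <;> rcases j' with ⟨c', e'⟩ | ⟨c', e'⟩
  · rw [myP_inl_eq_some] at h h'
    have he := Fin.lt_def.mp e.2
    have he' := Fin.lt_def.mp e'.2
    rcases h with ⟨h1, rfl⟩ | ⟨h1, rfl⟩ <;> rcases h' with ⟨h1', h2'⟩ | ⟨h1', h2'⟩ <;>
        simp only [Sum.inl.injEq, Prod.mk.injEq] at h2'
    · obtain ⟨rfl, hb⟩ := h2'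
      have ha : e.1.1 = e'.1.1 := h1.symm.trans h1'
      have : e = e' := Subtype.ext (Prod.ext ha hb)
      rw [this]
    · obtain ⟨rfl, hb⟩ := h2'
      have ha : e.1.1 = e'.1.2 := h1.symm.trans h1'
      have q1 := congrArg Fin.val ha
      have q2 := congrArg Fin.val hb
      omega
    · obtain ⟨rfl, hb⟩ := h2'
      have ha : e.1.2 = e'.1.1 := h1.symm.trans h1'
      have q1 := congrArg Fin.val ha
      have q2 := congrArg Fin.val hb
      omega
    · obtain ⟨rfl, hb⟩ := h2'
      have ha : e.1.2 = e'.1.2 := h1.symm.trans h1'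
      have : e = e' := Subtype.ext (Prod.ext hb ha)
      rw [this]
  · rw [myP_inl_eq_some] at h
    rw [myP_inr_eq_some] at h'
    rcases h with ⟨_, rfl⟩ | ⟨_, rfl⟩ <;> rcases h' with ⟨_, h2'⟩ | ⟨_, h2'⟩ <;> simp at h2'
  · rw [myP_inr_eq_some] at h
    rw [myP_inl_eq_some] at h'
    rcases h with ⟨_, rfl⟩ | ⟨_, rfl⟩ <;> rcases h' with ⟨_, h2'⟩ | ⟨_, h2'⟩ <;> simp at h2'
  · rw [myP_inr_eq_some] at h h'
    have he := Fin.lt_def.mp e.2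
    have he' := Fin.lt_def.mp e'.2
    rcases h with ⟨h1, rfl⟩ | ⟨h1, rfl⟩ <;> rcases h' with ⟨h1', h2'⟩ | ⟨h1', h2'⟩ <;>
        simp only [Sum.inr.injEq] at h2'
    · have hg := (myG_eq_iff m₂ r F hF).mp (h1.symm.trans h1')
      obtain ⟨rfl, ha⟩ := hg
      have : e = e' := Subtype.ext (Prod.ext ha h2')
      rw [this]
    · have hg := (myG_eq_iff m₂ r F hF).mp (h1.symm.trans h1')
      obtain ⟨rfl, ha⟩ := hg
      have q1 := congrArg Fin.val ha
      have q2 := congrArg Fin.val h2'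
      omega
    · have hg := (myG_eq_iff m₂ r F hF).mp (h1.symm.trans h1')
      obtain ⟨rfl, ha⟩ := hg
      have q1 := congrArg Fin.val ha
      have q2 := congrArg Fin.val h2'
      omega
    · have hg := (myG_eq_iff m₂ r F hF).mp (h1.symm.trans h1')
      obtain ⟨rfl, ha⟩ := hg
      have : e = e' := Subtype.ext (Prod.ext h2' ha)
      rw [this]

-- Condition 2 : column uniqueness
lemma myP_h2 (i i' : Fin F) (j : (Fin m₁ × SP F) ⊕ (Fin m₂ × SP r)) (s)
    (h : myP m₁ m₂ r F hF i j = some s) (h' : myP m₁ m₂ r F hF i' j = some s) : i = i' := by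
  rcases j with ⟨c, e⟩ | ⟨c, e⟩
  · rw [myP_inl_eq_some] at h h'
    have he := Fin.lt_def.mp e.2
    rcases h with ⟨h1, rfl⟩ | ⟨h1, rfl⟩ <;> rcases h' with ⟨h1', h2'⟩ | ⟨h1', h2'⟩ <;>
        simp only [Sum.inl.injEq, Prod.mk.injEq] at h2'
    · exact h1.trans h1'.symm
    · have := congrArg Fin.val h2'.2; omega
    · have := congrArg Fin.val h2'.2; omega
    · exact h1.trans h1'.symm
  · rw [myP_inr_eq_some] at h h'
    have he := Fin.lt_def.mp e.2
    rcases h with ⟨h1, rfl⟩ | ⟨h1, rfl⟩ <;> rcases h' with ⟨h1', h2'⟩ | ⟨h1', h2'⟩ <;>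
        simp only [Sum.inr.injEq] at h2'
    · exact h1.trans h1'.symm
    · have := congrArg Fin.val h2'; omega
    · have := congrArg Fin.val h2'; omega
    · exact h1.trans h1'.symm


-- Condition 3 : star condition
lemma myP_h3 (a c : Fin F) (b d : (Fin m₁ × SP F) ⊕ (Fin m₂ × SP r)) (s)
    (hne : (a, b) ≠ (c, d))
    (hb : myP m₁ m₂ r F hF a b = some s) (hd : myP m₁ m₂ r F hF c d = some s) :
    myP m₁ m₂ r F hF a d = none ∧ myP m₁ m₂ r F hF c b = none := by
  rcases b with ⟨c₁, e₁⟩ | ⟨c₁, e₁⟩ <;> rcases d with ⟨c₂, e₂⟩ | ⟨c₂, e₂⟩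
  · -- both inl
    rw [myP_inl_eq_some] at hb hd
    have he1 := Fin.lt_def.mp e₁.2
    have he2 := Fin.lt_def.mp e₂.2
    refine ⟨(myP_inl_eq_none m₁ m₂ r F hF).mpr ⟨?_, ?_⟩,
      (myP_inl_eq_none m₁ m₂ r F hF).mpr ⟨?_, ?_⟩⟩ <;>
      rcases hb with ⟨rfl, rfl⟩ | ⟨rfl, rfl⟩ <;>
      rcases hd with ⟨rfl, h2⟩ | ⟨rfl, h2⟩ <;>
      simp only [Sum.inl.injEq, Prod.mk.injEq] at h2 <;>
      obtain ⟨rfl, hb2⟩ := h2 <;>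
      (try (intro hq; have q1 := congrArg Fin.val hq; have q2 := congrArg Fin.val hb2; omega))
    · -- case (1,1) goal a ≠ e₂.1.1
      intro hq
      apply hne
      have he : e₁ = e₂ := Subtype.ext (Prod.ext hq hb2)
      rw [he]
    · -- case (2,2) goal a ≠ e₂.1.2
      intro hq
      apply hne
      have he : e₁ = e₂ := Subtype.ext (Prod.ext hb2 hq)
      rw [he]
    · -- case (1,1) goal c ≠ e₁.1.1
      intro hq
      apply hne
      have he : e₁ = e₂ := Subtype.ext (Prod.ext hq.symm hb2)
      rw [he]
    · -- case (2,2) goal c ≠ e₁.1.2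
      intro hq
      apply hne
      have he : e₁ = e₂ := Subtype.ext (Prod.ext hb2 hq.symm)
      rw [he]
  · -- inl / inr : label type mismatch
    rw [myP_inl_eq_some] at hb
    rw [myP_inr_eq_some] at hd
    rcases hb with ⟨_, rfl⟩ | ⟨_, rfl⟩ <;> rcases hd with ⟨_, h2⟩ | ⟨_, h2⟩ <;> simp at h2
  · rw [myP_inr_eq_some] at hb
    rw [myP_inl_eq_some] at hd
    rcases hb with ⟨_, rfl⟩ | ⟨_, rfl⟩ <;> rcases hd with ⟨_, h2⟩ | ⟨_, h2⟩ <;> simp at h2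
  · -- both inr
    rw [myP_inr_eq_some] at hb hd
    have he1 := Fin.lt_def.mp e₁.2
    have he2 := Fin.lt_def.mp e₂.2
    refine ⟨(myP_inr_eq_none m₁ m₂ r F hF).mpr ⟨?_, ?_⟩,
      (myP_inr_eq_none m₁ m₂ r F hF).mpr ⟨?_, ?_⟩⟩ <;>
      rcases hb with ⟨rfl, rfl⟩ | ⟨rfl, rfl⟩ <;>
      rcases hd with ⟨rfl, h2⟩ | ⟨rfl, h2⟩ <;>
      simp only [Sum.inr.injEq] at h2 <;>
      (try (intro hq; rw [myG_eq_iff] at hq; obtain ⟨rfl, hq⟩ := hq; have q1 := congrArg Fin.val hq; have q2 := congrArg Fin.val h2; omega))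
    · -- case (1,1) : a ≠ myG c₂ e₂.1.1
      intro hq
      rw [myG_eq_iff] at hq
      obtain ⟨rfl, hq⟩ := hq
      apply hne
      have he : e₁ = e₂ := Subtype.ext (Prod.ext hq h2)
      rw [he]
    · -- case (2,2) : a ≠ myG c₂ e₂.1.2
      intro hq
      rw [myG_eq_iff] at hq
      obtain ⟨rfl, hq⟩ := hq
      apply hne
      have he : e₁ = e₂ := Subtype.ext (Prod.ext h2 hq)
      rw [he]
    · -- case (1,1) : c ≠ myG c₁ e₁.1.1
      intro hq
      rw [myG_eq_iff] at hq
      obtain ⟨rfl, hq⟩ := hq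
      apply hne
      have he : e₁ = e₂ := Subtype.ext (Prod.ext hq.symm h2)
      rw [he]
    · -- case (2,2) : c ≠ myG c₁ e₁.1.2
      intro hq
      rw [myG_eq_iff] at hq
      obtain ⟨rfl, hq⟩ := hq
      apply hne
      have he : e₁ = e₂ := Subtype.ext (Prod.ext h2 hq.symm)
      rw [he]

-- Condition 4 : star count per column
lemma myP_h4 (hF2 : 2 ≤ F) (j : (Fin m₁ × SP F) ⊕ (Fin m₂ × SP r)) :
    (Finset.univ.filter (fun i => myP m₁ m₂ r F hF i j = none)).card = F - 2 := by
  rcases j with ⟨c, e⟩ | ⟨c, e⟩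
  · have key : (Finset.univ.filter (fun i => ¬ myP m₁ m₂ r F hF i (Sum.inl (c, e)) = none))
        = {e.1.1, e.1.2} := by
      ext i
      simp only [Finset.mem_filter, Finset.mem_univ, true_and, myP_inl_eq_none,
        Finset.mem_insert, Finset.mem_singleton]
      tauto
    have hcc : ({e.1.1, e.1.2} : Finset (Fin F)).card = 2 := Finset.card_pair (ne_of_lt e.2)
    have h := Finset.card_filter_add_card_filter_not (s := (univ : Finset (Fin F)))
        (p := fun i => myP m₁ m₂ r F hF i (Sum.inl (c, e)) = none)
    rw [key, hcc, Finset.card_univ, Fintype.card_fin] at h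
    omega
  · have hgne : myG m₂ r F hF c e.1.1 ≠ myG m₂ r F hF c e.1.2 := by
      rw [Ne, myG_eq_iff]
      exact fun h => absurd h.2 (ne_of_lt e.2)
    have key : (Finset.univ.filter (fun i => ¬ myP m₁ m₂ r F hF i (Sum.inr (c, e)) = none))
        = {myG m₂ r F hF c e.1.1, myG m₂ r F hF c e.1.2} := by
      ext i
      simp only [Finset.mem_filter, Finset.mem_univ, true_and, myP_inr_eq_none,
        Finset.mem_insert, Finset.mem_singleton]
      tauto
    have hcc : ({myG m₂ r F hF c e.1.1, myG m₂ r F hF c e.1.2} : Finset (Fin F)).card = 2 :=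
      Finset.card_pair hgne
    have h := Finset.card_filter_add_card_filter_not (s := (univ : Finset (Fin F)))
        (p := fun i => myP m₁ m₂ r F hF i (Sum.inr (c, e)) = none)
    rw [key, hcc, Finset.card_univ, Fintype.card_fin] at h
    omega

end Constr

lemma isPDA_of_equiv {K F Z S : ℕ} {C L : Type} [DecidableEq C] [DecidableEq L]
    (eC : Fin K ≃ C) (eL : L ≃ Fin S) (P₀ : Fin F → C → Option L)
    (h1 : ∀ i j j' s, P₀ i j = some s → P₀ i j' = some s → j = j')
    (h2 : ∀ i i' j s, P₀ i j = some s → P₀ i' j = some s → i = i')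
    (h3 : ∀ a c b d s, (a, b) ≠ (c, d) → P₀ a b = some s → P₀ c d = some s →
        P₀ a d = none ∧ P₀ c b = none)
    (h4 : ∀ j, (Finset.univ.filter (fun i => P₀ i j = none)).card = Z) :
    IsPDA K F Z S (fun i j => (P₀ i (eC j)).map eL) := by
  refine ⟨?_, ?_, ?_, ?_⟩
  · intro i j j' s hj hj'
    rw [Option.map_eq_some_iff] at hj hj'
    obtain ⟨a, ha, haL⟩ := hj
    obtain ⟨a', ha', haL'⟩ := hj'
    have : a = a' := eL.injective (haL.trans haL'.symm)
    subst this
    exact eC.injective (h1 i (eC j) (eC j') a ha ha')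
  · intro i i' j s hj hj'
    rw [Option.map_eq_some_iff] at hj hj'
    obtain ⟨a, ha, haL⟩ := hj
    obtain ⟨a', ha', haL'⟩ := hj'
    have : a = a' := eL.injective (haL.trans haL'.symm)
    subst this
    exact h2 i i' (eC j) a ha ha'
  · intro a c b d s hne hb hd
    rw [Option.map_eq_some_iff] at hb hd
    obtain ⟨x, hx, hxL⟩ := hb
    obtain ⟨x', hx', hxL'⟩ := hd
    have hxx : x = x' := eL.injective (hxL.trans hxL'.symm)
    subst hxx
    have hne' : (a, eC b) ≠ (c, eC d) := by
      intro h
      rw [Prod.ext_iff] at h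
      exact hne (Prod.ext h.1 (eC.injective h.2))
    have := h3 a c (eC b) (eC d) x hne' hx hx'
    constructor <;> simp only [Option.map_eq_none_iff]
    · exact this.1
    · exact this.2
  · intro j
    simp only [Option.map_eq_none_iff]
    exact h4 (eC j)

lemma two_dvd_mul_pred (n : ℕ) : 2 ∣ n * (n - 1) := by
  rcases Nat.even_or_odd n with h | h
  · exact h.two_dvd.mul_right _
  · have he : Even (n - 1) := Nat.Odd.sub_odd h odd_one
    exact he.two_dvd.mul_left _

lemma pda_exists (m₁ m₂ r F : ℕ) (hm₁ : 0 < m₁) (hm₂ : 0 < m₂) (hr : 0 < r)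
    (hF : F = r * m₂) (hF2 : 2 ≤ F) :
    PDAExists ((m₁ * F * (F - 1) + m₂ * r * (r - 1)) / 2) F (F - 2) (m₁ * F + r) := by
  obtain ⟨x, hx⟩ := two_dvd_mul_pred F
  obtain ⟨y, hy⟩ := two_dvd_mul_pred r
  have hC : Fintype.card ((Fin m₁ × SP F) ⊕ (Fin m₂ × SP r))
      = (m₁ * F * (F - 1) + m₂ * r * (r - 1)) / 2 := by
    rw [Fintype.card_sum, Fintype.card_prod, Fintype.card_prod, Fintype.card_fin,
      Fintype.card_fin, card_SP, card_SP]
    rw [mul_assoc m₁ F, mul_assoc m₂ r, hx, hy]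
    rw [Nat.mul_div_cancel_left x (by norm_num : 0 < 2),
      Nat.mul_div_cancel_left y (by norm_num : 0 < 2)]
    have e : m₁ * (2 * x) + m₂ * (2 * y) = 2 * (m₁ * x + m₂ * y) := by ring
    rw [e, Nat.mul_div_cancel_left _ (by norm_num : 0 < 2)]
  have hL : Fintype.card ((Fin m₁ × Fin F) ⊕ Fin r) = m₁ * F + r := by simp
  exact ⟨_, isPDA_of_equiv (Fintype.equivFinOfCardEq hC).symm (Fintype.equivFinOfCardEq hL)
    (myP m₁ m₂ r F hF) (myP_h1 m₁ m₂ r F hF) (myP_h2 m₁ m₂ r F hF) (myP_h3 m₁ m₂ r F hF)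
    (myP_h4 m₁ m₂ r F hF hF2)⟩

theorem pda_optimal_r_divides_F (m₁ m₂ r F : ℕ) (hm₁ : 0 < m₁) (hm₂ : 0 < m₂)
    (hr : 0 < r) (hF : F = r * m₂) (hF2 : 2 ≤ F) :
    IsGreatest {K : ℕ | PDAExists K F (F - 2) (m₁ * F + r)}
      ((m₁ * F * (F - 1) + m₂ * r * (r - 1)) / 2) := by
  constructor
  · exact pda_exists m₁ m₂ r F hm₁ hm₂ hr hF hF2
  · rintro K ⟨P, hP⟩
    have h2K := upper_bound hm₁ hr hF2 rfl hP
    have hEq : F * (m₁ * F + r - m₁ - 1) = m₁ * F * (F - 1) + m₂ * r * (r - 1) := by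
      obtain ⟨u, rfl⟩ : ∃ u, F = u + 1 := ⟨F - 1, by omega⟩
      obtain ⟨v, rfl⟩ : ∃ v, r = v + 1 := ⟨r - 1, by omega⟩
      simp only [Nat.add_sub_cancel]
      have e : m₁ * (u + 1) + (v + 1) - m₁ - 1 = m₁ * u + v := by
        have h : m₁ * (u + 1) = m₁ * u + m₁ := by ring
        omega
      rw [e, hF]
      ring
    rw [Nat.le_div_iff_mul_le (by norm_num : 0 < 2)]
    omega
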